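/- Given staircase data, let {f₀,…,f_{r−1}} = A ⊔ B be a partition of the first r staircase generators with f_{r−1} ∈ A. Then adjoining the last generator f_r = H₁⋯H_{t_r} to A does not change the intersection: Ideal.span (A ∪ {f_r}) ⊓ Ideal.span B = Ideal.span A ⊓ Ideal.span B. -/

import Mathlib

/- Common setup: R = ℂ[x₀,x₁,y₀,y₁] as MvPolynomial (Fin 4) ℂ with
   x₀ = X 0, x₁ = X 1, y₀ = X 2, y₁ = X 3.
   `Hf a` is the horizontal form a₁x₀ - a₀x₁ of the point a = [a₀:a₁] ∈ ℙ¹;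
   `Vf b` is the vertical form b₁y₀ - b₀y₁;
   `cross a b ≠ 0` says the (nonzero) pairs a, b are non-proportional,
   i.e. define distinct points of ℙ¹. -/

open MvPolynomial

noncomputable section

abbrev R : Type := MvPolynomial (Fin 4) ℂ

def Hf (a : ℂ × ℂ) : R := C a.2 * X 0 - C a.1 * X 1

def Vf (b : ℂ × ℂ) : R := C b.2 * X 2 - C b.1 * X 3

def cross (a b : ℂ × ℂ) : ℂ := a.1 * b.2 - a.2 * b.1

/-- The defining ideal of the point P = A×B of ℙ¹×ℙ¹. -/
def Ipt (P : (ℂ × ℂ) × (ℂ × ℂ)) : Ideal R := Ideal.span {Hf P.1, Vf P.2}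

/-- The defining ideal of a finite set of points (I_∅ = R = ⊤). -/
def Ipts (X : Finset ((ℂ × ℂ) × (ℂ × ℂ))) : Ideal R := X.inf Ipt

/-- The defining ideal of a set of points (I_∅ = R = ⊤). -/
def IptsSet (W : Set ((ℂ × ℂ) × (ℂ × ℂ))) : Ideal R := ⨅ P ∈ W, Ipt P

/-- Bihomogeneous: homogeneous separately in x₀,x₁ and in y₀,y₁. -/
def Bihom (f : R) : Prop :=
  ∃ a b : ℕ, IsWeightedHomogeneous (![1,1,0,0] : Fin 4 → ℕ) f a ∧
    IsWeightedHomogeneous (![0,0,1,1] : Fin 4 → ℕ) f b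

/-- `G` minimally generates `I`. -/
def MinGen (G : Finset R) (I : Ideal R) : Prop :=
  Ideal.span (G : Set R) = I ∧ ∀ g ∈ G, Ideal.span ((G : Set R) \ {g}) ≠ I

/-- Staircase data: r ≥ 1, 0 = t₀ < t₁ < ⋯ < t_r, 0 = s₀ < s₁ < ⋯ < s_r,
    pairwise distinct points A₁,…,A_{t_r} of ℙ¹ and pairwise distinct points
    B₁,…,B_{s_r} of ℙ¹ (all indexed starting at 1). -/
structure Staircase where
  r : ℕ
  t : ℕ → ℕ
  s : ℕ → ℕ
  A : ℕ → ℂ × ℂ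
  B : ℕ → ℂ × ℂ
  hr : 1 ≤ r
  ht0 : t 0 = 0
  hs0 : s 0 = 0
  ht : ∀ k, k < r → t k < t (k + 1)
  hs : ∀ k, k < r → s k < s (k + 1)
  hA0 : ∀ i ∈ Finset.Icc 1 (t r), A i ≠ 0
  hB0 : ∀ j ∈ Finset.Icc 1 (s r), B j ≠ 0
  hAd : ∀ i ∈ Finset.Icc 1 (t r), ∀ i' ∈ Finset.Icc 1 (t r), i ≠ i' → cross (A i) (A i') ≠ 0
  hBd : ∀ j ∈ Finset.Icc 1 (s r), ∀ j' ∈ Finset.Icc 1 (s r), j ≠ j' → cross (B j) (B j') ≠ 0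

/-- The staircase generator f_k = H₁⋯H_{t_k} · V₁⋯V_{s_{r-k}}. -/
def stairGen (S : Staircase) (k : ℕ) : R :=
  (∏ i ∈ Finset.Icc 1 (S.t k), Hf (S.A i)) * ∏ j ∈ Finset.Icc 1 (S.s (S.r - k)), Vf (S.B j)

/-! ### Auxiliary lemmas -/

lemma primeX (i : Fin 4) : Prime (X i : R) := by
  classical
  have h1 : Prime (X (⟨i, rfl⟩ : ({i} : Set (Fin 4))) : MvPolynomial ({i} : Set (Fin 4)) ℂ) := by
    haveI : Unique ({i} : Set (Fin 4)) := Set.uniqueSingleton i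
    rw [← MulEquiv.prime_iff ((renameEquiv ℂ (Equiv.equivPUnit.{1,1} _)).trans (pUnitAlgEquiv ℂ)).toMulEquiv]
    simp [pUnitAlgEquiv]
    exact Polynomial.prime_X
  have := (prime_rename_iff (R := ℂ) ({i} : Set (Fin 4)) (p := X ⟨i, rfl⟩)).2 h1
  simpa using this

lemma isUnitC {c : ℂ} (hc : c ≠ 0) : IsUnit (C c : R) :=
  (IsUnit.map (C : ℂ →+* R) (isUnit_iff_ne_zero.2 hc))

lemma primeVf (b : ℂ × ℂ) (hb : b ≠ 0) : Prime (Vf b) := by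
  by_cases h2 : b.2 = 0
  · have h1 : b.1 ≠ 0 := fun h1 => hb (Prod.ext h1 h2)
    have ha : Associated (X 3 : R) (Vf b) := by
      refine ⟨(isUnitC (neg_ne_zero.2 h1)).unit, ?_⟩
      simp only [IsUnit.unit_spec, Vf, h2]
      simp
      ring
    exact ha.prime (primeX 3)
  · let F : Fin 4 → R := fun i => if i = 2 then C b.2 * X 2 - C b.1 * X 3 else X i
    let G : Fin 4 → R := fun i => if i = 2 then C b.2⁻¹ * (X 2 + C b.1 * X 3) else X i
    have hF2 : F 2 = C b.2 * X 2 - C b.1 * X 3 := if_pos rfl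
    have hG2 : G 2 = C b.2⁻¹ * (X 2 + C b.1 * X 3) := if_pos rfl
    have hFi : ∀ i : Fin 4, i ≠ 2 → F i = X i := fun i hi => if_neg hi
    have hGi : ∀ i : Fin 4, i ≠ 2 → G i = X i := fun i hi => if_neg hi
    have hFG : (aeval F).comp (aeval G) = AlgHom.id ℂ R := by
      apply algHom_ext
      intro i
      rw [AlgHom.comp_apply, aeval_X, AlgHom.id_apply]
      by_cases hi : i = 2
      · subst hi
        rw [hG2, map_mul, map_add, map_mul, aeval_X, aeval_X, aeval_C, aeval_C,
          algebraMap_eq, hF2, hFi 3 (by decide)]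
        have e : C b.2⁻¹ * C b.2 = (1 : R) := by rw [← C_mul, inv_mul_cancel₀ h2, C_1]
        linear_combination (X 2 : R) * e
      · rw [hGi i hi, aeval_X, hFi i hi]
    have hGF : (aeval G).comp (aeval F) = AlgHom.id ℂ R := by
      apply algHom_ext
      intro i
      rw [AlgHom.comp_apply, aeval_X, AlgHom.id_apply]
      by_cases hi : i = 2
      · subst hi
        rw [hF2, map_sub, map_mul, map_mul, aeval_X, aeval_X, aeval_C, aeval_C,
          algebraMap_eq, hG2, hGi 3 (by decide)]
        have e : C b.2 * C b.2⁻¹ = (1 : R) := by rw [← C_mul, mul_inv_cancel₀ h2, C_1]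
        linear_combination (X 2 + C b.1 * X 3 : R) * e
      · rw [hFi i hi, aeval_X, hGi i hi]
    let e : R ≃ₐ[ℂ] R := AlgEquiv.ofAlgHom (aeval F) (aeval G) hFG hGF
    have he : e (X 2) = Vf b := by
      show aeval F (X 2) = Vf b
      rw [aeval_X, hF2]; rfl
    have := (MulEquiv.prime_iff e.toMulEquiv (p := (X 2 : R))).2 (primeX 2)
    rwa [show e.toMulEquiv (X 2) = Vf b from he] at this

lemma Hf_ne {a : ℂ × ℂ} (ha : a ≠ 0) : Hf a ≠ 0 := by
  intro h
  have := congrArg (eval (fun i : Fin 4 =>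
    if i = 0 then starRingEnd ℂ a.2 else if i = 1 then -(starRingEnd ℂ a.1) else 0)) h
  simp [Hf] at this
  simp only [Complex.mul_conj'] at this
  have hr : (‖a.2‖ ^ 2 + ‖a.1‖ ^ 2 : ℝ) = 0 := by exact_mod_cast this
  have h1 : ‖a.1‖ = 0 := by nlinarith [norm_nonneg a.1, norm_nonneg a.2, sq_nonneg ‖a.1‖, sq_nonneg ‖a.2‖]
  have h2 : ‖a.2‖ = 0 := by nlinarith [norm_nonneg a.1, norm_nonneg a.2, sq_nonneg ‖a.1‖, sq_nonneg ‖a.2‖]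
  exact ha (Prod.ext (norm_eq_zero.1 h1) (norm_eq_zero.1 h2))

lemma Vf_not_dvd_Hprod {b : ℂ × ℂ} (I : Finset ℕ) (A : ℕ → ℂ × ℂ)
    (hA : ∀ i ∈ I, A i ≠ 0) : ¬ Vf b ∣ ∏ i ∈ I, Hf (A i) := by
  intro ⟨g, hg⟩
  let F : Fin 4 → R := fun i => if i = 2 then C b.1 else if i = 3 then C b.2 else X i
  have hψH : ∀ a : ℂ × ℂ, aeval F (Hf a) = Hf a := by
    intro a
    rw [Hf, map_sub, map_mul, map_mul, aeval_C, aeval_C, aeval_X, aeval_X, algebraMap_eq]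
    have h0 : F 0 = X 0 := rfl
    have h1 : F 1 = X 1 := rfl
    rw [h0, h1]
  have hψV : aeval F (Vf b) = 0 := by
    rw [Vf, map_sub, map_mul, map_mul, aeval_C, aeval_C, aeval_X, aeval_X, algebraMap_eq]
    have h2 : F 2 = C b.1 := rfl
    have h3 : F 3 = C b.2 := rfl
    rw [h2, h3, mul_comm]
    exact sub_self _
  have h0 : (∏ i ∈ I, Hf (A i)) = 0 := by
    have := congrArg (aeval F) hg
    rw [map_prod, map_mul, hψV, zero_mul] at this
    calc (∏ i ∈ I, Hf (A i)) = ∏ i ∈ I, aeval F (Hf (A i)) := by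
          exact Finset.prod_congr rfl fun i _ => (hψH (A i)).symm
      _ = 0 := this
  exact Finset.prod_ne_zero_iff.2 (fun i hi => Hf_ne (hA i hi)) h0

lemma prod_prime_dvd (s : Finset ℕ) (p : ℕ → R) (f : R)
    (hp : ∀ j ∈ s, Prime (p j)) (hnd : ∀ j ∈ s, ¬ p j ∣ f) :
    ∀ c : R, (∏ j ∈ s, p j) ∣ c * f → (∏ j ∈ s, p j) ∣ c := by
  classical
  induction s using Finset.induction with
  | empty => intro c _; simpa using one_dvd c
  | @insert j s hj ih =>
    intro c h
    rw [Finset.prod_insert hj] at h ⊢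
    have hpj : Prime (p j) := hp j (Finset.mem_insert_self _ _)
    have hdj : p j ∣ c * f := dvd_trans (Dvd.intro _ rfl) h
    rcases hpj.2.2 c f hdj with hc | hf
    · obtain ⟨c', rfl⟩ := hc
      rw [mul_assoc] at h
      have h' := (mul_dvd_mul_iff_left hpj.ne_zero).1 h
      exact mul_dvd_mul_left (p j) (ih (fun k hk => hp k (Finset.mem_insert_of_mem hk))
        (fun k hk => hnd k (Finset.mem_insert_of_mem hk)) c' h')
    · exact absurd hf (hnd j (Finset.mem_insert_self _ _))

lemma Staircase.s_mono (S : Staircase) {m n : ℕ} (hmn : m ≤ n) (hn : n ≤ S.r) :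
    S.s m ≤ S.s n := by
  induction n with
  | zero => rw [Nat.le_zero.1 hmn]
  | succ n ih =>
    rcases eq_or_lt_of_le hmn with rfl | h
    · exact le_rfl
    · exact (ih (Nat.lt_succ_iff.1 h) (le_trans (Nat.le_succ n) hn)).trans
        (le_of_lt (S.hs n (by omega)))

lemma Staircase.t_mono (S : Staircase) {m n : ℕ} (hmn : m ≤ n) (hn : n ≤ S.r) :
    S.t m ≤ S.t n := by
  induction n with
  | zero => rw [Nat.le_zero.1 hmn]
  | succ n ih =>
    rcases eq_or_lt_of_le hmn with rfl | h
    · exact le_rfl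
    · exact (ih (Nat.lt_succ_iff.1 h) (le_trans (Nat.le_succ n) hn)).trans
        (le_of_lt (S.ht n (by omega)))

/-- (From the proof of Theorem 5.4.) If {f₀,…,f_{r-1}} = A ⊔ B is a partition of the
first r staircase generators (encoded by index sets KA ⊔ KB = {0,…,r-1}) with
f_{r-1} ∈ A, then adjoining f_r = H₁⋯H_{t_r} to A does not change the intersection. -/
theorem statement14 (S : Staircase) (KA KB : Finset ℕ)
    (hUnion : KA ∪ KB = Finset.range S.r) (hDisj : Disjoint KA KB)
    (hlast : S.r - 1 ∈ KA) :
    Ideal.span (insert (stairGen S S.r) (stairGen S '' ↑KA)) ⊓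
        Ideal.span (stairGen S '' ↑KB) =
      Ideal.span (stairGen S '' ↑KA) ⊓ Ideal.span (stairGen S '' ↑KB) := by
  classical
  set V : R := ∏ j ∈ Finset.Icc 1 (S.s 1), Vf (S.B j) with hV
  -- f_r is a product of horizontal forms only
  have hfr : stairGen S S.r = ∏ i ∈ Finset.Icc 1 (S.t S.r), Hf (S.A i) := by
    rw [stairGen, Nat.sub_self, S.hs0]
    simp
  -- V divides every stairGen S k for k < r
  have hVdvd : ∀ k, k < S.r → V ∣ stairGen S k := by
    intro k hk
    have h1 : (1 : ℕ) ≤ S.r - k := by omega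
    have h2 : S.r - k ≤ S.r := by omega
    have hsub : Finset.Icc 1 (S.s 1) ⊆ Finset.Icc 1 (S.s (S.r - k)) :=
      Finset.Icc_subset_Icc_right (S.s_mono h1 h2)
    exact Dvd.dvd.mul_left (Finset.prod_dvd_prod_of_subset _ _ _ hsub) _
  have hKA : ∀ k ∈ KA, k < S.r := by
    intro k hk
    have : k ∈ Finset.range S.r := hUnion ▸ Finset.mem_union_left _ hk
    exact Finset.mem_range.1 this
  have hKB : ∀ k ∈ KB, k < S.r := by
    intro k hk
    have : k ∈ Finset.range S.r := hUnion ▸ Finset.mem_union_right _ hk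
    exact Finset.mem_range.1 this
  have hspanA : Ideal.span (stairGen S '' ↑KA) ≤ Ideal.span {V} := by
    rw [Ideal.span_le]
    rintro _ ⟨k, hk, rfl⟩
    exact Ideal.mem_span_singleton.2 (hVdvd k (hKA k (by exact_mod_cast hk)))
  have hspanB : Ideal.span (stairGen S '' ↑KB) ≤ Ideal.span {V} := by
    rw [Ideal.span_le]
    rintro _ ⟨k, hk, rfl⟩
    exact Ideal.mem_span_singleton.2 (hVdvd k (hKB k (by exact_mod_cast hk)))
  refine le_antisymm ?_ (inf_le_inf_right _ (Ideal.span_mono (Set.subset_insert _ _)))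
  refine le_inf ?_ inf_le_right
  intro g hg
  obtain ⟨hg1, hg2⟩ := Submodule.mem_inf.1 hg
  rw [Ideal.span_insert] at hg1
  obtain ⟨y, hy, z, hz, rfl⟩ := Submodule.mem_sup.1 hg1
  obtain ⟨c, rfl⟩ := Ideal.mem_span_singleton'.1 hy
  -- V divides c * f_r
  have hzV : V ∣ z := Ideal.mem_span_singleton.1 (hspanA hz)
  have hgV : V ∣ c * stairGen S S.r + z := Ideal.mem_span_singleton.1 (hspanB hg2)
  have hcfV : V ∣ c * stairGen S S.r := by
    have := dvd_sub hgV hzV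
    simpa using this
  -- hence V divides c
  have hBne : ∀ j ∈ Finset.Icc 1 (S.s 1), S.B j ≠ 0 := by
    intro j hj
    refine S.hB0 j (Finset.Icc_subset_Icc_right (S.s_mono S.hr le_rfl) hj)
  have hVc : V ∣ c := by
    refine prod_prime_dvd _ _ (stairGen S S.r)
      (fun j hj => primeVf _ (hBne j hj)) (fun j hj => ?_) c hcfV
    rw [hfr]
    exact Vf_not_dvd_Hprod _ _ S.hA0
  obtain ⟨c', rfl⟩ := hVc
  -- f_{r-1} divides V * f_r, hence divides c * f_r
  have hfrm1 : stairGen S (S.r - 1) =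
      (∏ i ∈ Finset.Icc 1 (S.t (S.r - 1)), Hf (S.A i)) * V := by
    have hr1 : S.r - (S.r - 1) = 1 := by have := S.hr; omega
    rw [stairGen, hr1, hV]
  have hHdvd : (∏ i ∈ Finset.Icc 1 (S.t (S.r - 1)), Hf (S.A i)) ∣
      ∏ i ∈ Finset.Icc 1 (S.t S.r), Hf (S.A i) :=
    Finset.prod_dvd_prod_of_subset _ _ _
      (Finset.Icc_subset_Icc_right (S.t_mono (Nat.sub_le _ _) le_rfl))
  have hkey : stairGen S (S.r - 1) ∣ V * c' * stairGen S S.r := by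
    rw [hfrm1, hfr]
    calc (∏ i ∈ Finset.Icc 1 (S.t (S.r - 1)), Hf (S.A i)) * V ∣
        (∏ i ∈ Finset.Icc 1 (S.t S.r), Hf (S.A i)) * V := mul_dvd_mul hHdvd dvd_rfl
      _ ∣ V * c' * ∏ i ∈ Finset.Icc 1 (S.t S.r), Hf (S.A i) :=
        ⟨c', by ring⟩
  -- conclude
  have hmem : stairGen S (S.r - 1) ∈ Ideal.span (stairGen S '' ↑KA) :=
    Ideal.subset_span ⟨S.r - 1, by exact_mod_cast hlast, rfl⟩
  obtain ⟨w, hw⟩ := hkey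
  have hcf_mem : V * c' * stairGen S S.r ∈ Ideal.span (stairGen S '' ↑KA) := by
    rw [hw]
    exact Ideal.mul_mem_right _ _ hmem
  exact Ideal.add_mem _ hcf_mem hz
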